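/- Every star graph S_n (one center adjacent to n leaves, n ≥ 1) has the property that every second-order stationary point of its Kuramoto energy is synchronous: all vertices share the same phasor. -/

import Mathlib

open Real Classical

noncomputable section

/-- Real-valued adjacency indicator of a simple graph. -/
def adjW {V : Type*} (G : SimpleGraph V) (i j : V) : ℝ := if G.Adj i j then 1 else 0

/-- The phasor (unit vector in the plane) associated with an angle. -/
def phasor (t : ℝ) : ℝ × ℝ := (Real.cos t, Real.sin t)

/-- The Kuramoto energy. -/
def kEnergy {V : Type*} [Fintype V] (G : SimpleGraph V) (θ : V → ℝ) : ℝ :=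
  (1 / 2) * ∑ i, ∑ j, adjW G i j * (1 - Real.cos (θ i - θ j))

/-- The Hessian of the Kuramoto energy. -/
def kHess {V : Type*} [Fintype V] (G : SimpleGraph V) (θ : V → ℝ) : Matrix V V ℝ :=
  fun i j =>
    if i = j then ∑ k, adjW G i k * Real.cos (θ i - θ k)
    else -(adjW G i j * Real.cos (θ i - θ j))

/-- First-order (equilibrium) condition of the homogeneous Kuramoto model. -/
def IsEquilibrium {V : Type*} [Fintype V] (G : SimpleGraph V) (θ : V → ℝ) : Prop :=
  ∀ i, ∑ j, adjW G i j * Real.sin (θ j - θ i) = 0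

/-- Second-order stationary point of the Kuramoto energy. -/
def IsSOSP {V : Type*} [Fintype V] (G : SimpleGraph V) (θ : V → ℝ) : Prop :=
  IsEquilibrium G θ ∧ (kHess G θ).PosSemidef

/-- The star graph with center `0` and `n` leaves. -/
def starGraph (n : ℕ) : SimpleGraph (Fin (n + 1)) where
  Adj i j := i ≠ j ∧ (i = 0 ∨ j = 0)
  symm := by
    constructor
    intro i j h
    exact ⟨h.1.symm, h.2.symm⟩
  loopless := by
    constructor
    intro i h
    exact h.1 rfl

lemma leaf_adjW {n : ℕ} {i : Fin (n+1)} (hi : i ≠ 0) (j : Fin (n+1)) :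
    adjW (starGraph n) i j = if j = 0 then 1 else 0 := by
  unfold adjW
  show (if (starGraph n).Adj i j then (1:ℝ) else 0) = _
  have : (starGraph n).Adj i j ↔ (i ≠ j ∧ (i = 0 ∨ j = 0)) := Iff.rfl
  by_cases hj : j = 0
  · subst hj
    rw [if_pos (this.mpr ⟨hi, Or.inr rfl⟩), if_pos rfl]
  · rw [if_neg, if_neg hj]
    intro h
    rcases (this.mp h).2 with h0 | h0
    · exact hi h0
    · exact hj h0

lemma leaf_sum {n : ℕ} {i : Fin (n+1)} (hi : i ≠ 0) (f : Fin (n+1) → ℝ) :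
    ∑ j, adjW (starGraph n) i j * f j = f 0 := by
  rw [Finset.sum_eq_single_of_mem 0 (Finset.mem_univ 0)]
  · rw [leaf_adjW hi]; simp
  · intro j _ hj; rw [leaf_adjW hi]; simp [hj]

lemma leaf_phasor {n : ℕ} (hn : 1 ≤ n) (θ : Fin (n + 1) → ℝ)
    (hsosp : IsSOSP (starGraph n) θ) {i : Fin (n+1)} (hi : i ≠ 0) :
    phasor (θ i) = phasor (θ 0) := by
  obtain ⟨heq, hpsd⟩ := hsosp
  have hsin : Real.sin (θ 0 - θ i) = 0 := by
    have := heq i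
    rwa [leaf_sum hi (fun j => Real.sin (θ j - θ i))] at this
  have hsin' : Real.sin (θ i - θ 0) = 0 := by
    rw [← neg_sub, Real.sin_neg, hsin, neg_zero]
  have hdiag : kHess (starGraph n) θ i i = Real.cos (θ i - θ 0) := by
    unfold kHess
    simp only [if_pos rfl]
    exact leaf_sum hi (fun k => Real.cos (θ i - θ k))
  have hcos_nonneg : 0 ≤ Real.cos (θ i - θ 0) := by
    have h := hpsd.dotProduct_mulVec_nonneg (Pi.single i 1)
    have h2 : dotProduct (star (Pi.single i (1:ℝ)))
        ((kHess (starGraph n) θ).mulVec (Pi.single i 1))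
        = kHess (starGraph n) θ i i := by
      simp [dotProduct, Matrix.mulVec, Pi.single_apply, Finset.mul_sum]
    rw [h2, hdiag] at h
    exact h
  have hcos : Real.cos (θ i - θ 0) = 1 := by
    have h1 := Real.sin_sq_add_cos_sq (θ i - θ 0)
    rw [hsin'] at h1
    have h2 : Real.cos (θ i - θ 0) ^ 2 = 1 := by nlinarith
    nlinarith
  have hc : Real.cos (θ i) = Real.cos (θ 0) := by
    have : θ i = (θ i - θ 0) + θ 0 := by ring
    rw [this, Real.cos_add, hcos, hsin']; ring
  have hs : Real.sin (θ i) = Real.sin (θ 0) := by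
    have : θ i = (θ i - θ 0) + θ 0 := by ring
    rw [this, Real.sin_add, hcos, hsin']; ring
  unfold phasor
  rw [hc, hs]

theorem star_graph_sosp_synchronous
    (n : ℕ) (hn : 1 ≤ n) (θ : Fin (n + 1) → ℝ)
    (hsosp : IsSOSP (starGraph n) θ) :
    ∀ i j, phasor (θ i) = phasor (θ j) := by
  have key : ∀ i, phasor (θ i) = phasor (θ 0) := by
    intro i
    by_cases hi : i = 0
    · rw [hi]
    · exact leaf_phasor hn θ hsosp hi
  intro i j
  rw [key i, key j]
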